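/- (Stability of controlled doubling under extra conditioning) Let X be a ℚ-valued discrete random variable and Z, W further discrete random variables, with H[X|Z] and H[X|W,Z] both within O(δM) of a quantity M > 0. Then E_{(W,Z)=(w,z)} d[X|(W,Z)=(w,z); X|(W,Z)=(w,z)] ≤ 2 E_{Z=z} d[X|Z=z; X|Z=z] + C δ M for an absolute constant C, where d denotes the entropic Ruzsa distance. In particular, if the conditional self-doubling of X given Z is O(δM), so is the conditional self-doubling of X given (W,Z). -/

import Mathlib

open scoped Classical
open Finset

/-- Probability of an event under a weight function on a finite sample space. -/
noncomputable def prb {Ω : Type*} [Fintype Ω] (μ : Ω → ℝ) (E : Set Ω) : ℝ :=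
  ∑ ω ∈ Finset.univ.filter (fun ω => ω ∈ E), μ ω

/-- `μ` is a probability mass function on the finite space `Ω`. -/
def IsProb {Ω : Type*} [Fintype Ω] (μ : Ω → ℝ) : Prop :=
  (∀ ω, 0 ≤ μ ω) ∧ ∑ ω, μ ω = 1

/-- Shannon entropy of a random variable `X` on a finite probability space. -/
noncomputable def ent {Ω S : Type*} [Fintype Ω] (μ : Ω → ℝ) (X : Ω → S) : ℝ :=
  ∑ s ∈ Finset.univ.image X, Real.negMulLog (prb μ {ω | X ω = s})

/-- Independence of two random variables. -/
def IndepRV {Ω S T : Type*} [Fintype Ω] (μ : Ω → ℝ) (X : Ω → S) (Y : Ω → T) : Prop :=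
  ∀ x y, prb μ {ω | X ω = x ∧ Y ω = y} = prb μ {ω | X ω = x} * prb μ {ω | Y ω = y}

/-- Conditional Shannon entropy `H[X|Z] = H[X,Z] - H[Z]`. -/
noncomputable def condEnt {Ω S T : Type*} [Fintype Ω] (μ : Ω → ℝ) (X : Ω → S) (Z : Ω → T) : ℝ :=
  ent μ (fun ω => (X ω, Z ω)) - ent μ Z

/-- Entropic Ruzsa distance `d[X;Y] = H[X'-Y'] - H[X]/2 - H[Y]/2`,
realized on the product space so that the copies are independent. -/
noncomputable def rdist {Ω₁ Ω₂ : Type*} [Fintype Ω₁] [Fintype Ω₂]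
    (μ₁ : Ω₁ → ℝ) (μ₂ : Ω₂ → ℝ) (X : Ω₁ → ℚ) (Y : Ω₂ → ℚ) : ℝ :=
  ent (fun p : Ω₁ × Ω₂ => μ₁ p.1 * μ₂ p.2) (fun p => X p.1 - Y p.2)
    - ent μ₁ X / 2 - ent μ₂ Y / 2

/-- The quantity `g(a) = H[X - a X'] - H[X]`, where `X'` is an independent copy of `X`. -/
noncomputable def gfun {Ω : Type*} [Fintype Ω] (μ : Ω → ℝ) (X : Ω → ℚ) (a : ℚ) : ℝ :=
  ent (fun p : Ω × Ω => μ p.1 * μ p.2) (fun p => X p.1 - a * X p.2) - ent μ X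

/-- Projection `π_r(x,y) = x + r y` for a finite slope `some r`, and `π_∞(x,y) = y`. -/
noncomputable def pSlope : Option ℚ → ℚ × ℚ → ℚ
  | none, p => p.2
  | some r, p => p.1 + r * p.2

/-- The measure `μ` conditioned on the event `Z = z`. -/
noncomputable def condMeasure {Ω T : Type*} [Fintype Ω] (μ : Ω → ℝ) (Z : Ω → T) (z : T) :
    Ω → ℝ :=
  fun ω => if Z ω = z then μ ω / prb μ {ω' | Z ω' = z} else 0

/-- `E_{Z=z} d[X|Z=z ; X|Z=z]`, the averaged conditional entropic Ruzsa self-distance. -/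
noncomputable def condSelfDoubling {Ω T : Type*} [Fintype Ω] (μ : Ω → ℝ)
    (X : Ω → ℚ) (Z : Ω → T) : ℝ :=
  ∑ z ∈ Finset.univ.image Z, prb μ {ω | Z ω = z} *
    rdist (condMeasure μ Z z) (condMeasure μ Z z) X X
section Basic
variable {Ω Ω' S T U : Type*} [Fintype Ω] [Fintype Ω']

lemma prb_congr (μ : Ω → ℝ) {E F : Set Ω} (h : ∀ ω, ω ∈ E ↔ ω ∈ F) : prb μ E = prb μ F := by
  unfold prb
  congr 1
  apply Finset.filter_congr
  intro ω _
  simp [h ω]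

lemma prb_empty (μ : Ω → ℝ) {E : Set Ω} (h : ∀ ω, ω ∉ E) : prb μ E = 0 := by
  unfold prb
  rw [Finset.filter_false_of_mem (by intro ω _; exact h ω), Finset.sum_empty]

lemma prb_nonneg {μ : Ω → ℝ} (hμ : ∀ ω, 0 ≤ μ ω) (E : Set Ω) : 0 ≤ prb μ E :=
  Finset.sum_nonneg fun ω _ => hμ ω

lemma prb_mono {μ : Ω → ℝ} (hμ : ∀ ω, 0 ≤ μ ω) {E F : Set Ω} (h : ∀ ω, ω ∈ E → ω ∈ F) :
    prb μ E ≤ prb μ F := by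
  apply Finset.sum_le_sum_of_subset_of_nonneg
  · intro ω hω
    simp only [Finset.mem_filter] at *
    exact ⟨hω.1, h ω hω.2⟩
  · intro ω _ _; exact hμ ω

lemma single_le_prb {μ : Ω → ℝ} (hμ : ∀ ω, 0 ≤ μ ω) {E : Set Ω} {ω : Ω} (h : ω ∈ E) :
    μ ω ≤ prb μ E := by
  apply Finset.single_le_sum (f := μ) (fun i _ => hμ i)
  simp [h]

lemma prb_pos_of_mem {μ : Ω → ℝ} (hμ : ∀ ω, 0 ≤ μ ω) {E : Set Ω} {ω : Ω} (h : ω ∈ E)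
    (hω : μ ω ≠ 0) : 0 < prb μ E :=
  lt_of_lt_of_le (lt_of_le_of_ne (hμ ω) (Ne.symm hω)) (single_le_prb hμ h)

lemma mem_of_prb_eq_zero {μ : Ω → ℝ} (hμ : ∀ ω, 0 ≤ μ ω) {E : Set Ω} {ω : Ω} (h : ω ∈ E)
    (hE : prb μ E = 0) : μ ω = 0 := by
  by_contra hω
  exact absurd hE (ne_of_gt (prb_pos_of_mem hμ h hω))

lemma prb_univ (μ : Ω → ℝ) : prb μ Set.univ = ∑ ω, μ ω := by
  unfold prb; simp

lemma sum_fiber (μ : Ω → ℝ) (X : Ω → S) (f : S → ℝ) :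
    ∑ s ∈ Finset.univ.image X, prb μ {ω | X ω = s} * f s = ∑ ω, μ ω * f (X ω) := by
  rw [← Finset.sum_fiberwise_of_maps_to (g := X) (t := Finset.univ.image X)
    (fun x _ => Finset.mem_image_of_mem X (Finset.mem_univ x)) (fun ω => μ ω * f (X ω))]
  apply Finset.sum_congr rfl
  intro s _
  unfold prb
  rw [Finset.sum_mul]
  apply Finset.sum_congr
  · apply Finset.filter_congr; intro ω _; exact Iff.rfl
  · intro ω hω
    simp only [Finset.mem_filter] at hω
    rw [hω.2]

lemma prb_partition (μ : Ω → ℝ) (Q : Set Ω) (B : Ω → T) :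
    ∑ b ∈ Finset.univ.image B, prb μ {ω | ω ∈ Q ∧ B ω = b} = prb μ Q := by
  unfold prb
  rw [← Finset.sum_fiberwise_of_maps_to (g := B) (t := Finset.univ.image B)
    (fun x _ => Finset.mem_image_of_mem B (Finset.mem_univ x)) μ]
  apply Finset.sum_congr rfl
  intro b _
  apply Finset.sum_congr _ (fun _ _ => rfl)
  ext ω
  simp only [Finset.mem_filter, Finset.mem_univ, true_and, Set.mem_setOf_eq]

lemma sum_prb_eq_one {μ : Ω → ℝ} (h1 : ∑ ω, μ ω = 1) (B : Ω → T) :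
    ∑ b ∈ Finset.univ.image B, prb μ {ω | B ω = b} = 1 := by
  have := prb_partition μ Set.univ B
  simp only [Set.mem_univ, true_and] at this
  rw [this, prb_univ, h1]

lemma sum_superset_prb (μ : Ω → ℝ) (V : Ω → S) {s : Finset S} (hs : Finset.univ.image V ⊆ s)
    (F : S → ℝ) :
    ∑ v ∈ s, prb μ {ω | V ω = v} * F v = ∑ v ∈ Finset.univ.image V, prb μ {ω | V ω = v} * F v := by
  symm
  apply Finset.sum_subset hs
  intro v _ hv
  rw [prb_empty]
  · ring
  · intro ω hω
    exact hv (hω ▸ Finset.mem_image_of_mem V (Finset.mem_univ ω))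

end Basic
section Core
variable {Ω Ω' S T U : Type*} [Fintype Ω] [Fintype Ω']

lemma ent_eq (μ : Ω → ℝ) (X : Ω → S) :
    ent μ X = ∑ ω, μ ω * (-Real.log (prb μ {ω' | X ω' = X ω})) := by
  rw [← sum_fiber μ X (fun s => -Real.log (prb μ {ω' | X ω' = s}))]
  unfold ent
  apply Finset.sum_congr rfl
  intro s _
  rw [Real.negMulLog]
  ring

lemma master {μ r : Ω → ℝ} (hμ : ∀ ω, 0 ≤ μ ω) (h1 : ∑ ω, μ ω = 1)
    (hr : ∀ ω, μ ω ≠ 0 → 0 < r ω) (hs : ∑ ω, μ ω * r ω ≤ 1) :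
    ∑ ω, μ ω * Real.log (r ω) ≤ 0 := by
  have key : ∀ ω, μ ω * Real.log (r ω) ≤ μ ω * r ω - μ ω := by
    intro ω
    rcases eq_or_ne (μ ω) 0 with h | h
    · simp [h]
    · have h1 := Real.log_le_sub_one_of_pos (hr ω h)
      have h2 : 0 < μ ω := lt_of_le_of_ne (hμ ω) (Ne.symm h)
      nlinarith
  calc ∑ ω, μ ω * Real.log (r ω) ≤ ∑ ω, (μ ω * r ω - μ ω) := Finset.sum_le_sum fun ω _ => key ω
  _ = (∑ ω, μ ω * r ω) - ∑ ω, μ ω := by rw [Finset.sum_sub_distrib]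
  _ ≤ 1 - 1 := by rw [h1]; linarith
  _ = 0 := by ring

lemma ent_comp_le {μ : Ω → ℝ} (hμ : ∀ ω, 0 ≤ μ ω) (X : Ω → S) (f : S → T) :
    ent μ (fun ω => f (X ω)) ≤ ent μ X := by
  rw [ent_eq, ent_eq]
  apply Finset.sum_le_sum
  intro ω _
  rcases eq_or_ne (μ ω) 0 with h | h
  · simp [h]
  · have hp : 0 < prb μ {ω' | X ω' = X ω} := prb_pos_of_mem hμ rfl h
    have hle : prb μ {ω' | X ω' = X ω} ≤ prb μ {ω' | f (X ω') = f (X ω)} :=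
      prb_mono hμ (fun ω' h' => by simp only [Set.mem_setOf_eq] at *; rw [h'])
    have := Real.log_le_log hp hle
    have h2 : 0 ≤ μ ω := hμ ω
    nlinarith

lemma ent_comp_eq {μ : Ω → ℝ} (hμ : ∀ ω, 0 ≤ μ ω) (X : Ω → S) (f : S → T) (g : T → S)
    (hg : ∀ ω, g (f (X ω)) = X ω) :
    ent μ (fun ω => f (X ω)) = ent μ X := by
  apply le_antisymm (ent_comp_le hμ X f)
  have h2 := ent_comp_le hμ (fun ω => f (X ω)) g
  have : (fun ω => g (f (X ω))) = X := funext hg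
  rwa [this] at h2

lemma ent_push (μ : Ω → ℝ) (μ' : Ω' → ℝ) (g : Ω → Ω') (X : Ω' → S)
    (hp : ∀ s, prb μ {ω | X (g ω) = s} = prb μ' {ω' | X ω' = s}) :
    ent μ (fun ω => X (g ω)) = ent μ' X := by
  unfold ent
  rw [Finset.sum_subset (Finset.subset_union_left (s₁ := Finset.univ.image (fun ω => X (g ω)))
        (s₂ := Finset.univ.image X)),
      Finset.sum_subset (Finset.subset_union_right (s₁ := Finset.univ.image (fun ω => X (g ω)))
        (s₂ := Finset.univ.image X))]
  · apply Finset.sum_congr rfl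
    intro s _
    rw [hp s]
  · intro s _ hs
    rw [prb_empty]
    · exact Real.negMulLog_zero
    · intro ω hω
      exact hs (hω ▸ Finset.mem_image_of_mem _ (Finset.mem_univ ω))
  · intro s _ hs
    rw [prb_empty]
    · exact Real.negMulLog_zero
    · intro ω hω
      exact hs (hω ▸ Finset.mem_image_of_mem _ (Finset.mem_univ ω))

lemma prb_map (μ : Ω → ℝ) (μ' : Ω' → ℝ) (g : Ω → Ω')
    (hg : ∀ ω', prb μ {ω | g ω = ω'} = μ' ω') (E : Set Ω') :
    prb μ {ω | g ω ∈ E} = prb μ' E := by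
  have h0 := prb_partition μ {ω | g ω ∈ E} g
  have h1 : ∀ ω' ∈ Finset.univ.image g,
      prb μ {ω | ω ∈ {ω | g ω ∈ E} ∧ g ω = ω'} = (if ω' ∈ E then μ' ω' else 0) := by
    intro ω' _
    by_cases hE : ω' ∈ E
    · rw [if_pos hE, ← hg ω']
      apply prb_congr
      intro ω
      simp only [Set.mem_setOf_eq]
      constructor
      · exact fun h => h.2
      · intro h; exact ⟨h ▸ hE, h⟩
    · rw [if_neg hE, prb_empty]
      intro ω hω
      simp only [Set.mem_setOf_eq] at hω
      exact hE (hω.2 ▸ hω.1)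
  rw [Finset.sum_congr rfl h1] at h0
  rw [← h0]
  rw [Finset.sum_subset (Finset.subset_univ _)]
  · rw [← Finset.sum_filter]
    rfl
  · intro ω' _ hω'
    by_cases hE : ω' ∈ E
    · rw [if_pos hE, ← hg ω', prb_empty]
      intro ω hω
      exact hω' (hω ▸ Finset.mem_image_of_mem g (Finset.mem_univ ω))
    · rw [if_neg hE]

end Core
section Prod
variable {Ω Ω' Ω'' S T U : Type*} [Fintype Ω] [Fintype Ω'] [Fintype Ω'']
set_option linter.unusedSectionVars false

lemma ent_map (μ : Ω → ℝ) (μ' : Ω' → ℝ) (g : Ω → Ω')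
    (hg : ∀ ω', prb μ {ω | g ω = ω'} = μ' ω') (X : Ω' → S) :
    ent μ (fun ω => X (g ω)) = ent μ' X :=
  ent_push μ μ' g X (fun s => prb_map μ μ' g hg {x | X x = s})

lemma prb_prod (μ₁ : Ω → ℝ) (μ₂ : Ω' → ℝ) (E : Set Ω) (F : Set Ω') :
    prb (fun p : Ω × Ω' => μ₁ p.1 * μ₂ p.2) {p | p.1 ∈ E ∧ p.2 ∈ F} = prb μ₁ E * prb μ₂ F := by
  unfold prb
  rw [← Finset.univ_product_univ]
  refine Eq.trans (Finset.sum_congr (s₂ :=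
      (Finset.univ.filter (fun ω => ω ∈ E)) ×ˢ (Finset.univ.filter (fun ω => ω ∈ F)))
      ?_ (fun _ _ => rfl)) ?_
  · ext p
    simp only [Finset.mem_filter, Finset.mem_product, Set.mem_setOf_eq]
    tauto
  · rw [Finset.sum_product, Finset.sum_mul_sum]

lemma prb_prod_fst (μ₁ : Ω → ℝ) (μ₂ : Ω' → ℝ) (h2 : ∑ ω, μ₂ ω = 1) (E : Set Ω) :
    prb (fun p : Ω × Ω' => μ₁ p.1 * μ₂ p.2) {p | p.1 ∈ E} = prb μ₁ E := by
  have := prb_prod μ₁ μ₂ E Set.univ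
  rw [prb_univ, h2, mul_one] at this
  rw [← this]
  exact prb_congr _ (fun ω => by simp)

lemma prb_prod_snd (μ₁ : Ω → ℝ) (μ₂ : Ω' → ℝ) (h1 : ∑ ω, μ₁ ω = 1) (F : Set Ω') :
    prb (fun p : Ω × Ω' => μ₁ p.1 * μ₂ p.2) {p | p.2 ∈ F} = prb μ₂ F := by
  have := prb_prod μ₁ μ₂ Set.univ F
  rw [prb_univ, h1, one_mul] at this
  rw [← this]
  exact prb_congr _ (fun ω => by simp)

lemma mprod_nonneg {μ₁ : Ω → ℝ} {μ₂ : Ω' → ℝ} (h1 : ∀ ω, 0 ≤ μ₁ ω) (h2 : ∀ ω, 0 ≤ μ₂ ω) :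
    ∀ p : Ω × Ω', 0 ≤ μ₁ p.1 * μ₂ p.2 :=
  fun p => mul_nonneg (h1 p.1) (h2 p.2)

lemma mprod_isProb {μ₁ : Ω → ℝ} {μ₂ : Ω' → ℝ} (h1 : IsProb μ₁) (h2 : IsProb μ₂) :
    IsProb (fun p : Ω × Ω' => μ₁ p.1 * μ₂ p.2) := by
  refine ⟨mprod_nonneg h1.1 h2.1, ?_⟩
  rw [← Finset.univ_product_univ, Finset.sum_product, ← Finset.sum_mul_sum, h1.2, h2.2, one_mul]

lemma ent_fst (μ₁ : Ω → ℝ) (μ₂ : Ω' → ℝ) (h2 : ∑ ω, μ₂ ω = 1) (X : Ω → S) :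
    ent (fun p : Ω × Ω' => μ₁ p.1 * μ₂ p.2) (fun p => X p.1) = ent μ₁ X :=
  ent_push _ μ₁ Prod.fst X (fun s => prb_prod_fst μ₁ μ₂ h2 {ω | X ω = s})

lemma ent_snd (μ₁ : Ω → ℝ) (μ₂ : Ω' → ℝ) (h1 : ∑ ω, μ₁ ω = 1) (Y : Ω' → S) :
    ent (fun p : Ω × Ω' => μ₁ p.1 * μ₂ p.2) (fun p => Y p.2) = ent μ₂ Y :=
  ent_push _ μ₂ Prod.snd Y (fun s => prb_prod_snd μ₁ μ₂ h1 {ω | Y ω = s})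

lemma prb_singleton (μ : Ω → ℝ) (ω₀ : Ω) : prb μ {ω | ω = ω₀} = μ ω₀ := by
  unfold prb
  rw [show Finset.univ.filter (fun ω => ω ∈ {ω | ω = ω₀}) = {ω₀} from ?_, Finset.sum_singleton]
  ext ω
  simp [Set.mem_setOf_eq]

end Prod
section Submod
variable {Ω S T U : Type*} [Fintype Ω]
set_option linter.unusedSectionVars false

lemma submod {μ : Ω → ℝ} (hμ : IsProb μ) (V : Ω → S) (B : Ω → T) (f : S → U) :
    ent μ (fun ω => (V ω, B ω)) + ent μ (fun ω => f (V ω)) ≤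
      ent μ V + ent μ (fun ω => (f (V ω), B ω)) := by
  classical
  have hpos : ∀ ω, μ ω ≠ 0 →
      0 < prb μ {ω' | V ω' = V ω} ∧ 0 < prb μ {ω' | (V ω', B ω') = (V ω, B ω)} ∧
      0 < prb μ {ω' | f (V ω') = f (V ω)} ∧ 0 < prb μ {ω' | (f (V ω'), B ω') = (f (V ω), B ω)} :=
    fun ω hω => ⟨prb_pos_of_mem hμ.1 rfl hω, prb_pos_of_mem hμ.1 rfl hω,
      prb_pos_of_mem hμ.1 rfl hω, prb_pos_of_mem hμ.1 rfl hω⟩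
  set r : Ω → ℝ := fun ω => prb μ {ω' | V ω' = V ω} * prb μ {ω' | (f (V ω'), B ω') = (f (V ω), B ω)}
      / (prb μ {ω' | (V ω', B ω') = (V ω, B ω)} * prb μ {ω' | f (V ω') = f (V ω)}) with hrdef
  have hrpos : ∀ ω, μ ω ≠ 0 → 0 < r ω := by
    intro ω hω
    obtain ⟨h1, h2, h3, h4⟩ := hpos ω hω
    exact div_pos (mul_pos h1 h4) (mul_pos h2 h3)
  have hdiff : ent μ (fun ω => (V ω, B ω)) + ent μ (fun ω => f (V ω))
      - ent μ V - ent μ (fun ω => (f (V ω), B ω)) = ∑ ω, μ ω * Real.log (r ω) := by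
    rw [ent_eq μ (fun ω => (V ω, B ω)), ent_eq μ (fun ω => f (V ω)), ent_eq μ V,
      ent_eq μ (fun ω => (f (V ω), B ω))]
    rw [← Finset.sum_add_distrib, ← Finset.sum_sub_distrib, ← Finset.sum_sub_distrib]
    apply Finset.sum_congr rfl
    intro ω _
    rcases eq_or_ne (μ ω) 0 with h | h
    · simp [h]
    · obtain ⟨h1, h2, h3, h4⟩ := hpos ω h
      rw [hrdef]
      rw [Real.log_div (by positivity) (by positivity), Real.log_mul (ne_of_gt h1) (ne_of_gt h4),
        Real.log_mul (ne_of_gt h2) (ne_of_gt h3)]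
      ring
  -- the main bound : ∑ ω, μ ω * r ω ≤ 1
  have hsum : ∑ ω, μ ω * r ω ≤ 1 := by
    have hfib := sum_fiber μ (fun ω => (V ω, B ω)) (fun t =>
      prb μ {ω' | V ω' = t.1} * prb μ {ω' | (f (V ω'), B ω') = (f t.1, t.2)}
        / (prb μ {ω' | (V ω', B ω') = t} * prb μ {ω' | f (V ω') = f t.1}))
    rw [← hfib]
    -- now bound the fiber sum
    have step1 : ∀ t : S × T,
        prb μ {ω | (V ω, B ω) = t} *
          (prb μ {ω' | V ω' = t.1} * prb μ {ω' | (f (V ω'), B ω') = (f t.1, t.2)}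
            / (prb μ {ω' | (V ω', B ω') = t} * prb μ {ω' | f (V ω') = f t.1})) ≤
        prb μ {ω' | V ω' = t.1} *
          (prb μ {ω' | (f (V ω'), B ω') = (f t.1, t.2)} / prb μ {ω' | f (V ω') = f t.1}) := by
      intro t
      rcases eq_or_ne (prb μ {ω | (V ω, B ω) = t}) 0 with h | h
      · rw [h, zero_mul]
        have n1 := prb_nonneg hμ.1 {ω' | V ω' = t.1}
        have n2 := prb_nonneg hμ.1 {ω' | (f (V ω'), B ω') = (f t.1, t.2)}
        have n3 := prb_nonneg hμ.1 {ω' | f (V ω') = f t.1}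
        positivity
      · have hfle : prb μ {ω | (V ω, B ω) = t} ≤ prb μ {ω' | f (V ω') = f t.1} := by
          apply prb_mono hμ.1
          intro ω hω
          simp only [Set.mem_setOf_eq] at *
          rw [← hω]
        have h3 : prb μ {ω' | f (V ω') = f t.1} ≠ 0 := by
          intro h0
          have := prb_nonneg hμ.1 {ω | (V ω, B ω) = t}
          have := lt_of_le_of_ne this (Ne.symm h)
          rw [h0] at hfle
          linarith
        apply le_of_eq
        field_simp
    refine le_trans (Finset.sum_le_sum (fun t _ => step1 t)) ?_
    refine le_trans (Finset.sum_le_sum_of_subset_of_nonneg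
        (t := (Finset.univ.image V) ×ˢ (Finset.univ.image B)) ?_ ?_) ?_
    · intro t ht
      simp only [Finset.mem_image] at ht
      obtain ⟨ω, _, hω⟩ := ht
      rw [← hω]
      exact Finset.mem_product.mpr ⟨Finset.mem_image_of_mem V (Finset.mem_univ ω),
        Finset.mem_image_of_mem B (Finset.mem_univ ω)⟩
    · intro t _ _
      have n1 := prb_nonneg hμ.1 {ω' | V ω' = t.1}
      have n2 := prb_nonneg hμ.1 {ω' | (f (V ω'), B ω') = (f t.1, t.2)}
      have n3 := prb_nonneg hμ.1 {ω' | f (V ω') = f t.1}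
      positivity
    · rw [Finset.sum_product]
      have inner : ∀ v ∈ Finset.univ.image V,
          ∑ b ∈ Finset.univ.image B,
            prb μ {ω' | V ω' = v} *
              (prb μ {ω' | (f (V ω'), B ω') = (f v, b)} / prb μ {ω' | f (V ω') = f v}) ≤
          prb μ {ω' | V ω' = v} := by
        intro v _
        rw [← Finset.mul_sum]
        have hb : ∑ b ∈ Finset.univ.image B,
            prb μ {ω' | (f (V ω'), B ω') = (f v, b)} / prb μ {ω' | f (V ω') = f v} ≤ 1 := by
          rw [← Finset.sum_div]
          have hpart : ∑ b ∈ Finset.univ.image B,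
              prb μ {ω' | (f (V ω'), B ω') = (f v, b)} = prb μ {ω' | f (V ω') = f v} := by
            rw [← prb_partition μ {ω' | f (V ω') = f v} B]
            apply Finset.sum_congr rfl
            intro b _
            apply prb_congr
            intro ω
            simp only [Set.mem_setOf_eq, Prod.mk.injEq]
          rw [hpart]
          exact div_self_le_one _
        calc prb μ {ω' | V ω' = v} * (∑ b ∈ Finset.univ.image B,
              prb μ {ω' | (f (V ω'), B ω') = (f v, b)} / prb μ {ω' | f (V ω') = f v})
            ≤ prb μ {ω' | V ω' = v} * 1 :=
              mul_le_mul_of_nonneg_left hb (prb_nonneg hμ.1 _)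
          _ = prb μ {ω' | V ω' = v} := mul_one _
      exact le_trans (Finset.sum_le_sum inner) (le_of_eq (sum_prb_eq_one hμ.2 V))
  have := master hμ.1 hμ.2 hrpos hsum
  linarith

lemma ent_pair_comm {μ : Ω → ℝ} (hμ : ∀ ω, 0 ≤ μ ω) (V : Ω → S) (B : Ω → T) :
    ent μ (fun ω => (V ω, B ω)) = ent μ (fun ω => (B ω, V ω)) := by
  have := ent_comp_eq hμ (fun ω => (V ω, B ω)) Prod.swap Prod.swap (fun ω => rfl)
  exact this.symm

lemma ent_const {μ : Ω → ℝ} (hμ : IsProb μ) (c : T) : ent μ (fun _ => c) = 0 := by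
  have hne : Nonempty Ω := by
    by_contra h
    rw [not_nonempty_iff] at h
    have := hμ.2
    rw [Finset.univ_eq_empty, Finset.sum_empty] at this
    linarith
  unfold ent
  rw [show Finset.univ.image (fun _ : Ω => c) = {c} from ?_]
  · rw [Finset.sum_singleton]
    rw [show prb μ {ω : Ω | c = c} = 1 from ?_]
    · exact Real.negMulLog_one
    · rw [show {ω : Ω | c = c} = Set.univ from by ext ω; simp, prb_univ, hμ.2]
  · obtain ⟨ω⟩ := hne
    exact Finset.image_const ⟨ω, Finset.mem_univ ω⟩ c

lemma ent_subadd {μ : Ω → ℝ} (hμ : IsProb μ) (V : Ω → S) (B : Ω → T) :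
    ent μ (fun ω => (V ω, B ω)) ≤ ent μ V + ent μ B := by
  have h := submod hμ V B (fun _ => ())
  rw [ent_const hμ ()] at h
  have h2 : ent μ (fun ω => ((), B ω)) = ent μ B :=
    ent_comp_eq hμ.1 B (fun b => ((), b)) Prod.snd (fun ω => rfl)
  rw [h2] at h
  linarith

lemma ent_indep {μ : Ω → ℝ} (hμ : ∀ ω, 0 ≤ μ ω) {A : Ω → S} {B : Ω → T}
    (h : IndepRV μ A B) :
    ent μ (fun ω => (A ω, B ω)) = ent μ A + ent μ B := by
  rw [ent_eq μ (fun ω => (A ω, B ω)), ent_eq μ A, ent_eq μ B, ← Finset.sum_add_distrib]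
  apply Finset.sum_congr rfl
  intro ω _
  rcases eq_or_ne (μ ω) 0 with h0 | h0
  · simp [h0]
  · have hAB : prb μ {ω' | (A ω', B ω') = (A ω, B ω)} =
        prb μ {ω' | A ω' = A ω} * prb μ {ω' | B ω' = B ω} := by
      rw [← h (A ω) (B ω)]
      apply prb_congr
      intro ω'
      simp only [Set.mem_setOf_eq, Prod.mk.injEq]
    have h1 : 0 < prb μ {ω' | A ω' = A ω} := prb_pos_of_mem hμ rfl h0
    have h2 : 0 < prb μ {ω' | B ω' = B ω} := prb_pos_of_mem hμ rfl h0
    rw [hAB, Real.log_mul (ne_of_gt h1) (ne_of_gt h2)]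
    ring

end Submod
section Cond
variable {Ω S T U : Type*} [Fintype Ω]
set_option linter.unusedSectionVars false

lemma condMeasure_nonneg {μ : Ω → ℝ} (hμ : ∀ ω, 0 ≤ μ ω) (Z : Ω → T) (z : T) :
    ∀ ω, 0 ≤ condMeasure μ Z z ω := by
  intro ω
  unfold condMeasure
  split
  · have h1 := hμ ω
    have h2 := prb_nonneg hμ {ω' | Z ω' = z}
    positivity
  · exact le_refl 0

lemma prb_cond (μ : Ω → ℝ) (Z : Ω → T) (z : T) (E : Set Ω) :
    prb (condMeasure μ Z z) E = prb μ (E ∩ {ω | Z ω = z}) / prb μ {ω' | Z ω' = z} := by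
  unfold prb condMeasure
  rw [Finset.sum_ite, Finset.sum_const_zero, add_zero, ← Finset.sum_div]
  congr 1
  apply Finset.sum_congr _ (fun _ _ => rfl)
  rw [Finset.filter_filter]
  ext ω
  simp only [Finset.mem_filter, Set.mem_inter_iff, Set.mem_setOf_eq]

lemma condMeasure_isProb {μ : Ω → ℝ} (hμ : IsProb μ) (Z : Ω → T) (z : T)
    (hz : prb μ {ω' | Z ω' = z} ≠ 0) : IsProb (condMeasure μ Z z) := by
  refine ⟨condMeasure_nonneg hμ.1 Z z, ?_⟩
  rw [← prb_univ, prb_cond, Set.univ_inter]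
  exact div_self hz

lemma condMeasure_pair {μ : Ω → ℝ} (hμ : ∀ ω, 0 ≤ μ ω) (W : Ω → U) (Z : Ω → T) (w : U) (z : T) :
    condMeasure μ (fun ω => (W ω, Z ω)) (w, z) = condMeasure (condMeasure μ Z z) W w := by
  funext ω
  have hPcongr : prb μ {ω' | (W ω', Z ω') = (w, z)} = prb μ ({ω' | W ω' = w} ∩ {ω' | Z ω' = z}) :=
    prb_congr μ (fun ω' => by simp [Prod.ext_iff, Set.mem_setOf_eq])
  have hout : condMeasure (condMeasure μ Z z) W w ω =
      if W ω = w then condMeasure μ Z z ω / prb (condMeasure μ Z z) {ω' | W ω' = w} else 0 := rfl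
  have hlhs : condMeasure μ (fun ω => (W ω, Z ω)) (w, z) ω =
      @ite _ ((W ω, Z ω) = (w, z)) (Classical.propDecidable _)
        (μ ω / prb μ {ω' | (W ω', Z ω') = (w, z)}) 0 := rfl
  rw [hout, hlhs, prb_cond μ Z z {ω' | W ω' = w}]
  by_cases hW : W ω = w
  · by_cases hZ : Z ω = z
    · rw [if_pos (by rw [hW, hZ]), if_pos hW]
      rw [show condMeasure μ Z z ω = μ ω / prb μ {ω' | Z ω' = z} from by
        unfold condMeasure; rw [if_pos hZ]]
      rw [hPcongr]
      rcases eq_or_ne (prb μ ({ω' | W ω' = w} ∩ {ω' | Z ω' = z})) 0 with hP | hP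
      · have hμω : μ ω = 0 := mem_of_prb_eq_zero hμ (show ω ∈ {ω' | W ω' = w} ∩ {ω' | Z ω' = z} from ⟨hW, hZ⟩) hP
        rw [hμω, hP]
        simp
      · have hpz : prb μ {ω' | Z ω' = z} ≠ 0 := by
          intro h0
          apply hP
          have hle : prb μ ({ω' | W ω' = w} ∩ {ω' | Z ω' = z}) ≤ prb μ {ω' | Z ω' = z} :=
            prb_mono hμ (fun ω' h => h.2)
          have hge := prb_nonneg hμ ({ω' | W ω' = w} ∩ {ω' | Z ω' = z})
          rw [h0] at hle
          linarith
        field_simp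
    · rw [if_neg (by simp [Prod.ext_iff, hZ]), if_pos hW]
      rw [show condMeasure μ Z z ω = 0 from by unfold condMeasure; rw [if_neg hZ]]
      simp
  · rw [if_neg (by simp [Prod.ext_iff, hW]), if_neg hW]

lemma cond_slice {μ : Ω → ℝ} (hμ : ∀ ω, 0 ≤ μ ω) (X : Ω → S) (Z : Ω → T) (z : T) :
    prb μ {ω' | Z ω' = z} * ent (condMeasure μ Z z) X =
      ∑ ω ∈ Finset.univ.filter (fun ω => Z ω = z),
        μ ω * (Real.log (prb μ {ω' | Z ω' = z}) -
          Real.log (prb μ {ω' | X ω' = X ω ∧ Z ω' = z})) := by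
  rcases eq_or_ne (prb μ {ω' | Z ω' = z}) 0 with hz | hz
  · rw [hz, zero_mul]
    symm
    apply Finset.sum_eq_zero
    intro ω hω
    simp only [Finset.mem_filter] at hω
    rw [mem_of_prb_eq_zero hμ (hω.2 : ω ∈ {ω' | Z ω' = z}) hz, zero_mul]
  · rw [ent_eq (condMeasure μ Z z) X, Finset.mul_sum]
    rw [← Finset.sum_subset (Finset.filter_subset (fun ω => Z ω = z) Finset.univ)]
    · apply Finset.sum_congr rfl
      intro ω hω
      simp only [Finset.mem_filter] at hω
      have hZω := hω.2
      rw [show condMeasure μ Z z ω = μ ω / prb μ {ω' | Z ω' = z} from by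
        unfold condMeasure; rw [if_pos hZω]]
      rw [prb_cond μ Z z {ω' | X ω' = X ω}]
      rw [show {ω' | X ω' = X ω} ∩ {ω' | Z ω' = z} = {ω' | X ω' = X ω ∧ Z ω' = z} from rfl]
      rcases eq_or_ne (μ ω) 0 with h0 | h0
      · rw [h0]; simp
      · have hq : 0 < prb μ {ω' | X ω' = X ω ∧ Z ω' = z} :=
          prb_pos_of_mem hμ (Set.mem_setOf_eq ▸ ⟨rfl, hZω⟩) h0
        rw [Real.log_div (ne_of_gt hq) hz]
        field_simp
        ring
    · intro ω _ hω
      simp only [Finset.mem_filter, Finset.mem_univ, true_and] at hω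
      rw [show condMeasure μ Z z ω = 0 from by unfold condMeasure; rw [if_neg hω]]
      ring

lemma condEnt_decomp {μ : Ω → ℝ} (hμ : ∀ ω, 0 ≤ μ ω) (X : Ω → S) (Z : Ω → T) :
    condEnt μ X Z = ∑ z ∈ Finset.univ.image Z,
      prb μ {ω | Z ω = z} * ent (condMeasure μ Z z) X := by
  have hR : ∀ z ∈ Finset.univ.image Z, prb μ {ω | Z ω = z} * ent (condMeasure μ Z z) X =
      ∑ ω ∈ Finset.univ.filter (fun ω => Z ω = z),
        μ ω * (Real.log (prb μ {ω' | Z ω' = Z ω}) -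
          Real.log (prb μ {ω' | X ω' = X ω ∧ Z ω' = Z ω})) := by
    intro z _
    rw [cond_slice hμ X Z z]
    apply Finset.sum_congr rfl
    intro ω hω
    simp only [Finset.mem_filter] at hω
    rw [hω.2]
  rw [Finset.sum_congr rfl hR]
  rw [Finset.sum_fiberwise_of_maps_to (g := Z) (t := Finset.univ.image Z)
    (fun x _ => Finset.mem_image_of_mem Z (Finset.mem_univ x))]
  unfold condEnt
  rw [ent_eq μ (fun ω => (X ω, Z ω)), ent_eq μ Z, ← Finset.sum_sub_distrib]
  apply Finset.sum_congr rfl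
  intro ω _
  have hcongr : prb μ {ω' | (X ω', Z ω') = (X ω, Z ω)} =
      prb μ {ω' | X ω' = X ω ∧ Z ω' = Z ω} :=
    prb_congr μ (fun ω' => by simp [Prod.ext_iff, Set.mem_setOf_eq])
  rw [hcongr]
  ring

end Cond
section Rdist
variable {Ω₁ Ω₂ Ω₃ : Type*} [Fintype Ω₁] [Fintype Ω₂] [Fintype Ω₃]
set_option linter.unusedSectionVars false

lemma rdist_symm {μ₁ : Ω₁ → ℝ} {μ₂ : Ω₂ → ℝ} (h₁ : ∀ ω, 0 ≤ μ₁ ω) (h₂ : ∀ ω, 0 ≤ μ₂ ω)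
    (X : Ω₁ → ℚ) (Y : Ω₂ → ℚ) : rdist μ₁ μ₂ X Y = rdist μ₂ μ₁ Y X := by
  unfold rdist
  have hlaw : ∀ q : Ω₂ × Ω₁,
      prb (fun p : Ω₁ × Ω₂ => μ₁ p.1 * μ₂ p.2) {p | (p.2, p.1) = q} = μ₂ q.1 * μ₁ q.2 := by
    intro q
    calc prb (fun p : Ω₁ × Ω₂ => μ₁ p.1 * μ₂ p.2) {p | (p.2, p.1) = q}
        = prb (fun p : Ω₁ × Ω₂ => μ₁ p.1 * μ₂ p.2) {p | p.1 ∈ {ω | ω = q.2} ∧ p.2 ∈ {ω | ω = q.1}} :=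
          prb_congr _ (fun p => by
            simp only [Set.mem_setOf_eq, Prod.ext_iff]
            try tauto)
      _ = prb μ₁ {ω | ω = q.2} * prb μ₂ {ω | ω = q.1} := prb_prod μ₁ μ₂ _ _
      _ = μ₂ q.1 * μ₁ q.2 := by rw [prb_singleton, prb_singleton]; ring
  have hmap : ent (fun p : Ω₁ × Ω₂ => μ₁ p.1 * μ₂ p.2) (fun p => Y p.2 - X p.1) =
      ent (fun q : Ω₂ × Ω₁ => μ₂ q.1 * μ₁ q.2) (fun q => Y q.1 - X q.2) :=
    ent_map (fun p : Ω₁ × Ω₂ => μ₁ p.1 * μ₂ p.2) (fun q : Ω₂ × Ω₁ => μ₂ q.1 * μ₁ q.2)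
      (fun p => (p.2, p.1)) hlaw (fun q => Y q.1 - X q.2)
  have hneg : ent (fun p : Ω₁ × Ω₂ => μ₁ p.1 * μ₂ p.2) (fun p => Y p.2 - X p.1) =
      ent (fun p : Ω₁ × Ω₂ => μ₁ p.1 * μ₂ p.2) (fun p => X p.1 - Y p.2) := by
    have h := ent_comp_eq (μ := fun p : Ω₁ × Ω₂ => μ₁ p.1 * μ₂ p.2)
      (mprod_nonneg h₁ h₂) (fun p => X p.1 - Y p.2) (fun x => -x) (fun x => -x)
      (fun ω => by ring)
    have hfun : (fun p : Ω₁ × Ω₂ => -(X p.1 - Y p.2)) = (fun p : Ω₁ × Ω₂ => Y p.2 - X p.1) :=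
      funext (fun p => by ring)
    rw [hfun] at h
    exact h
  rw [← hmap, hneg]
  ring

lemma rdist_triangle {μ₁ : Ω₁ → ℝ} {μ₂ : Ω₂ → ℝ} {μ₃ : Ω₃ → ℝ}
    (h₁ : IsProb μ₁) (h₂ : IsProb μ₂) (h₃ : IsProb μ₃)
    (X : Ω₁ → ℚ) (Y : Ω₂ → ℚ) (Z : Ω₃ → ℚ) :
    rdist μ₁ μ₃ X Z ≤ rdist μ₁ μ₂ X Y + rdist μ₂ μ₃ Y Z := by
  classical
  set ν : Ω₂ × Ω₃ → ℝ := fun r => μ₂ r.1 * μ₃ r.2 with hν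
  set π : Ω₁ × Ω₂ × Ω₃ → ℝ := fun p => μ₁ p.1 * ν p.2 with hπ
  have hνP : IsProb ν := mprod_isProb h₂ h₃
  have hπP : IsProb π := mprod_isProb h₁ hνP
  -- random variables on the triple space
  set AB : Ω₁ × Ω₂ × Ω₃ → ℚ := fun p => X p.1 - Y p.2.1 with hAB
  set BC : Ω₁ × Ω₂ × Ω₃ → ℚ := fun p => Y p.2.1 - Z p.2.2 with hBC
  set AC : Ω₁ × Ω₂ × Ω₃ → ℚ := fun p => X p.1 - Z p.2.2 with hAC
  set B : Ω₁ × Ω₂ × Ω₃ → ℚ := fun p => Y p.2.1 with hB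
  set AC2 : Ω₁ × Ω₂ × Ω₃ → ℚ × ℚ := fun p => (X p.1, Z p.2.2) with hAC2
  -- transfer lemmas
  have lawAC : ∀ q : Ω₁ × Ω₃, prb π {p | (p.1, p.2.2) = q} = μ₁ q.1 * μ₃ q.2 := by
    intro q
    calc prb π {p | (p.1, p.2.2) = q}
        = prb π {p | p.1 ∈ {ω | ω = q.1} ∧ p.2 ∈ {r : Ω₂ × Ω₃ | r.2 ∈ {ω | ω = q.2}}} :=
          prb_congr _ (fun p => by
            simp only [Set.mem_setOf_eq, Prod.ext_iff]
            try tauto)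
      _ = prb μ₁ {ω | ω = q.1} * prb ν {r : Ω₂ × Ω₃ | r.2 ∈ {ω | ω = q.2}} := prb_prod μ₁ ν _ _
      _ = μ₁ q.1 * μ₃ q.2 := by
          rw [hν, prb_prod_snd μ₂ μ₃ h₂.2, prb_singleton, prb_singleton]
  have lawAB : ∀ q : Ω₁ × Ω₂, prb π {p | (p.1, p.2.1) = q} = μ₁ q.1 * μ₂ q.2 := by
    intro q
    calc prb π {p | (p.1, p.2.1) = q}
        = prb π {p | p.1 ∈ {ω | ω = q.1} ∧ p.2 ∈ {r : Ω₂ × Ω₃ | r.1 ∈ {ω | ω = q.2}}} :=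
          prb_congr _ (fun p => by
            simp only [Set.mem_setOf_eq, Prod.ext_iff]
            try tauto)
      _ = prb μ₁ {ω | ω = q.1} * prb ν {r : Ω₂ × Ω₃ | r.1 ∈ {ω | ω = q.2}} := prb_prod μ₁ ν _ _
      _ = μ₁ q.1 * μ₂ q.2 := by
          rw [hν, prb_prod_fst μ₂ μ₃ h₃.2, prb_singleton, prb_singleton]
  have lawBC : ∀ q : Ω₂ × Ω₃, prb π {p | p.2 = q} = ν q := by
    intro q
    calc prb π {p | p.2 = q}
        = prb π {p | p.2 ∈ {r : Ω₂ × Ω₃ | r = q}} := prb_congr _ (fun p => Iff.rfl)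
      _ = prb ν {r : Ω₂ × Ω₃ | r = q} := prb_prod_snd μ₁ ν h₁.2 _
      _ = ν q := prb_singleton ν q
  have lawB : ∀ b : Ω₂, prb π {p | p.2.1 = b} = μ₂ b := by
    intro b
    calc prb π {p | p.2.1 = b}
        = prb π {p | p.2 ∈ {r : Ω₂ × Ω₃ | r.1 ∈ {ω | ω = b}}} := prb_congr _ (fun p => Iff.rfl)
      _ = prb ν {r : Ω₂ × Ω₃ | r.1 ∈ {ω | ω = b}} := prb_prod_snd μ₁ ν h₁.2 _
      _ = prb μ₂ {ω | ω = b} := by rw [hν, prb_prod_fst μ₂ μ₃ h₃.2]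
      _ = μ₂ b := prb_singleton μ₂ b
  have lawA : ∀ a : Ω₁, prb π {p | p.1 = a} = μ₁ a := by
    intro a
    calc prb π {p | p.1 = a}
        = prb π {p | p.1 ∈ {ω | ω = a}} := prb_congr _ (fun p => Iff.rfl)
      _ = prb μ₁ {ω | ω = a} := prb_prod_fst μ₁ ν hνP.2 _
      _ = μ₁ a := prb_singleton μ₁ a
  have eAC : ent π AC = ent (fun q : Ω₁ × Ω₃ => μ₁ q.1 * μ₃ q.2) (fun q => X q.1 - Z q.2) :=
    ent_map π _ (fun p => (p.1, p.2.2)) lawAC (fun q => X q.1 - Z q.2)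
  have eAB : ent π AB = ent (fun q : Ω₁ × Ω₂ => μ₁ q.1 * μ₂ q.2) (fun q => X q.1 - Y q.2) :=
    ent_map π _ (fun p => (p.1, p.2.1)) lawAB (fun q => X q.1 - Y q.2)
  have eBC : ent π BC = ent ν (fun q : Ω₂ × Ω₃ => Y q.1 - Z q.2) :=
    ent_map π ν Prod.snd lawBC (fun q => Y q.1 - Z q.2)
  have eB : ent π B = ent μ₂ Y :=
    ent_map π μ₂ (fun p => p.2.1) lawB Y
  -- independence of B and AC2
  have hindep : IndepRV π B AC2 := by
    intro b t
    have e1 : prb π {p | B p = b ∧ AC2 p = t} =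
        prb μ₁ {ω | X ω = t.1} * (prb μ₂ {ω | Y ω = b} * prb μ₃ {ω | Z ω = t.2}) := by
      calc prb π {p | B p = b ∧ AC2 p = t}
          = prb π {p | p.1 ∈ {ω | X ω = t.1} ∧
              p.2 ∈ {r : Ω₂ × Ω₃ | r.1 ∈ {ω | Y ω = b} ∧ r.2 ∈ {ω | Z ω = t.2}}} :=
            prb_congr _ (fun p => by
              simp only [hB, hAC2, Set.mem_setOf_eq, Prod.ext_iff]
              try tauto)
        _ = prb μ₁ {ω | X ω = t.1} *
              prb ν {r : Ω₂ × Ω₃ | r.1 ∈ {ω | Y ω = b} ∧ r.2 ∈ {ω | Z ω = t.2}} :=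
            prb_prod μ₁ ν _ _
        _ = prb μ₁ {ω | X ω = t.1} * (prb μ₂ {ω | Y ω = b} * prb μ₃ {ω | Z ω = t.2}) := by
            rw [hν, prb_prod μ₂ μ₃]
    have e2 : prb π {p | B p = b} = prb μ₂ {ω | Y ω = b} := by
      calc prb π {p | B p = b}
          = prb π {p | p.2 ∈ {r : Ω₂ × Ω₃ | r.1 ∈ {ω | Y ω = b}}} := prb_congr _ (fun p => Iff.rfl)
        _ = prb ν {r : Ω₂ × Ω₃ | r.1 ∈ {ω | Y ω = b}} := prb_prod_snd μ₁ ν h₁.2 _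
        _ = prb μ₂ {ω | Y ω = b} := by rw [hν, prb_prod_fst μ₂ μ₃ h₃.2]
    have e3 : prb π {p | AC2 p = t} = prb μ₁ {ω | X ω = t.1} * prb μ₃ {ω | Z ω = t.2} := by
      calc prb π {p | AC2 p = t}
          = prb π {p | p.1 ∈ {ω | X ω = t.1} ∧ p.2 ∈ {r : Ω₂ × Ω₃ | r.2 ∈ {ω | Z ω = t.2}}} :=
            prb_congr _ (fun p => by
              simp only [hAC2, Set.mem_setOf_eq, Prod.ext_iff]
              try tauto)
        _ = prb μ₁ {ω | X ω = t.1} * prb ν {r : Ω₂ × Ω₃ | r.2 ∈ {ω | Z ω = t.2}} :=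
            prb_prod μ₁ ν _ _
        _ = prb μ₁ {ω | X ω = t.1} * prb μ₃ {ω | Z ω = t.2} := by
            rw [hν, prb_prod_snd μ₂ μ₃ h₂.2]
    rw [e1, e2, e3]
    ring
  -- the chain of entropy inequalities
  have step1 : ent π (fun p => (AB p, AC p)) ≤ ent π (fun p => (AB p, BC p)) := by
    have h := ent_comp_le hπP.1 (fun p => (AB p, BC p)) (fun u => (u.1, u.1 + u.2))
    have hfun : (fun p => ((fun u : ℚ × ℚ => (u.1, u.1 + u.2)) ((fun p => (AB p, BC p)) p))) =
        (fun p => (AB p, AC p)) := by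
      funext p
      show (AB p, AB p + BC p) = (AB p, AC p)
      exact congrArg (Prod.mk (AB p)) (by rw [hAB, hBC, hAC]; ring)
    rw [hfun] at h
    exact h
  have step2 : ent π (fun p => (AB p, BC p)) ≤ ent π AB + ent π BC := ent_subadd hπP _ _
  have step3 : ent π (fun p => (AC2 p, AB p)) + ent π AC ≤
      ent π AC2 + ent π (fun p => (AC p, AB p)) := by
    have h := submod hπP AC2 AB (fun t => t.1 - t.2)
    have hfun : (fun p => (fun t : ℚ × ℚ => t.1 - t.2) (AC2 p)) = AC := rfl
    rw [hfun] at h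
    exact h
  have step4 : ent π (fun p => (AC p, AB p)) = ent π (fun p => (AB p, AC p)) :=
    ent_pair_comm hπP.1 AC AB
  have step5 : ent π (fun p => (AC2 p, AB p)) = ent π (fun p => (AC2 p, B p)) := by
    have h := ent_comp_eq hπP.1 (fun p => (AC2 p, B p))
      (fun u : (ℚ × ℚ) × ℚ => (u.1, u.1.1 - u.2)) (fun u : (ℚ × ℚ) × ℚ => (u.1, u.1.1 - u.2))
      (fun p => by
        show ((AC2 p), (AC2 p).1 - ((AC2 p).1 - B p)) = (AC2 p, B p)
        exact congrArg (Prod.mk (AC2 p)) (by ring))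
    have hfun : (fun p => (fun u : (ℚ × ℚ) × ℚ => (u.1, u.1.1 - u.2)) ((fun p => (AC2 p, B p)) p)) =
        (fun p => (AC2 p, AB p)) := rfl
    rw [hfun] at h
    exact h
  have step6 : ent π (fun p => (AC2 p, B p)) = ent π AC2 + ent π B := by
    rw [ent_pair_comm hπP.1 AC2 B]
    rw [ent_indep hπP.1 hindep]
    ring
  have key : ent π AC + ent π B ≤ ent π AB + ent π BC := by
    have h5' := step5
    rw [step6] at h5'
    linarith
  -- translate to rdist
  unfold rdist
  have hACle : ent (fun q : Ω₁ × Ω₃ => μ₁ q.1 * μ₃ q.2) (fun q => X q.1 - Z q.2) +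
      ent μ₂ Y ≤
      ent (fun q : Ω₁ × Ω₂ => μ₁ q.1 * μ₂ q.2) (fun q => X q.1 - Y q.2) +
      ent ν (fun q : Ω₂ × Ω₃ => Y q.1 - Z q.2) := by
    rw [← eAC, ← eAB, ← eBC, ← eB]
    exact key
  rw [hν] at hACle
  linarith

end Rdist
section PerSlice
variable {Ω T : Type*} [Fintype Ω]
set_option linter.unusedSectionVars false

lemma condMeasure_prod_fst {ν : Ω → ℝ} {ρ : Ω' → ℝ} [Fintype Ω'] (hρ : ∑ ω, ρ ω = 1)
    (W : Ω → T) (w : T) :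
    condMeasure (fun p : Ω × Ω' => ν p.1 * ρ p.2) (fun p => W p.1) w =
      fun p : Ω × Ω' => condMeasure ν W w p.1 * ρ p.2 := by
  funext p
  have hq : prb (fun p : Ω × Ω' => ν p.1 * ρ p.2) {p' | (fun p : Ω × Ω' => W p.1) p' = w} =
      prb ν {ω | W ω = w} := by
    calc prb (fun p : Ω × Ω' => ν p.1 * ρ p.2) {p' | (fun p : Ω × Ω' => W p.1) p' = w}
        = prb (fun p : Ω × Ω' => ν p.1 * ρ p.2) {p' | p'.1 ∈ {ω | W ω = w}} :=
          prb_congr _ (fun p' => Iff.rfl)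
      _ = prb ν {ω | W ω = w} := prb_prod_fst ν ρ hρ _
  show (if W p.1 = w then ν p.1 * ρ p.2 /
      prb (fun p : Ω × Ω' => ν p.1 * ρ p.2) {p' | (fun p : Ω × Ω' => W p.1) p' = w} else 0) =
    (if W p.1 = w then ν p.1 / prb ν {ω' | W ω' = w} else 0) * ρ p.2
  rw [hq]
  by_cases hw : W p.1 = w
  · rw [if_pos hw, if_pos hw]
    ring
  · rw [if_neg hw, if_neg hw, zero_mul]

lemma per_slice {ν : Ω → ℝ} (hν : IsProb ν) (X : Ω → ℚ) (W : Ω → T) :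
    ∑ w ∈ Finset.univ.image W, prb ν {ω | W ω = w} *
      rdist (condMeasure ν W w) (condMeasure ν W w) X X
    ≤ 2 * rdist ν ν X X + (ent ν X - condEnt ν X W) := by
  classical
  -- step 1 : pointwise triangle bound
  have hpt : ∀ w ∈ Finset.univ.image W,
      prb ν {ω | W ω = w} * rdist (condMeasure ν W w) (condMeasure ν W w) X X ≤
      prb ν {ω | W ω = w} * (2 * rdist (condMeasure ν W w) ν X X) := by
    intro w _
    rcases eq_or_ne (prb ν {ω | W ω = w}) 0 with hw | hw
    · rw [hw, zero_mul, zero_mul]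
    · apply mul_le_mul_of_nonneg_left _ (prb_nonneg hν.1 _)
      have hwP : IsProb (condMeasure ν W w) := condMeasure_isProb hν W w hw
      have htri := rdist_triangle hwP hν hwP X X X
      have hsymm := rdist_symm hν.1 (condMeasure_nonneg hν.1 W w) X X
      linarith
  refine le_trans (Finset.sum_le_sum hpt) ?_
  -- step 2 : expand rdist
  have expand : ∑ w ∈ Finset.univ.image W, prb ν {ω | W ω = w} *
        (2 * rdist (condMeasure ν W w) ν X X) =
      2 * (∑ w ∈ Finset.univ.image W, prb ν {ω | W ω = w} *
        ent (fun p : Ω × Ω => condMeasure ν W w p.1 * ν p.2) (fun p => X p.1 - X p.2))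
      - (∑ w ∈ Finset.univ.image W, prb ν {ω | W ω = w} * ent (condMeasure ν W w) X)
      - (∑ w ∈ Finset.univ.image W, prb ν {ω | W ω = w}) * ent ν X := by
    rw [Finset.mul_sum, Finset.sum_mul, ← Finset.sum_sub_distrib, ← Finset.sum_sub_distrib]
    apply Finset.sum_congr rfl
    intro w _
    unfold rdist
    ring
  rw [expand]
  -- step 3 : identify the pieces
  have hcondX : ∑ w ∈ Finset.univ.image W, prb ν {ω | W ω = w} * ent (condMeasure ν W w) X =
      condEnt ν X W := (condEnt_decomp hν.1 X W).symm
  have hone : ∑ w ∈ Finset.univ.image W, prb ν {ω | W ω = w} = 1 := sum_prb_eq_one hν.2 W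
  -- step 4 : the entropy sum is a conditional entropy on the product space
  have hEsum : ∑ w ∈ Finset.univ.image W, prb ν {ω | W ω = w} *
      ent (fun p : Ω × Ω => condMeasure ν W w p.1 * ν p.2) (fun p => X p.1 - X p.2) ≤
      ent (fun p : Ω × Ω => ν p.1 * ν p.2) (fun p => X p.1 - X p.2) := by
    set D : Ω × Ω → ℚ := fun p => X p.1 - X p.2 with hD
    set W1 : Ω × Ω → T := fun p => W p.1 with hW1
    set πν : Ω × Ω → ℝ := fun p => ν p.1 * ν p.2 with hπν
    have hπP : IsProb πν := mprod_isProb hν hν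
    have hdec := condEnt_decomp hπP.1 D W1
    have hsub : Finset.univ.image W1 ⊆ Finset.univ.image W := by
      intro x hx
      simp only [Finset.mem_image] at hx
      obtain ⟨p, _, hp⟩ := hx
      exact hp ▸ Finset.mem_image_of_mem W (Finset.mem_univ p.1)
    have hext := sum_superset_prb πν W1 hsub (fun w => ent (condMeasure πν W1 w) D)
    have hterm : ∀ w ∈ Finset.univ.image W,
        prb πν {p | W1 p = w} * ent (condMeasure πν W1 w) D =
        prb ν {ω | W ω = w} *
          ent (fun p : Ω × Ω => condMeasure ν W w p.1 * ν p.2) D := by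
      intro w _
      have h1 : prb πν {p | W1 p = w} = prb ν {ω | W ω = w} := by
        calc prb πν {p | W1 p = w}
            = prb πν {p | p.1 ∈ {ω | W ω = w}} := prb_congr _ (fun p => Iff.rfl)
          _ = prb ν {ω | W ω = w} := prb_prod_fst ν ν hν.2 _
      have h2 : condMeasure πν W1 w = fun p : Ω × Ω => condMeasure ν W w p.1 * ν p.2 :=
        condMeasure_prod_fst hν.2 W w
      rw [h1, h2]
    have hcond_le : condEnt πν D W1 ≤ ent πν D := by
      have hsa := ent_subadd hπP D W1
      unfold condEnt
      linarith
    calc ∑ w ∈ Finset.univ.image W, prb ν {ω | W ω = w} *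
          ent (fun p : Ω × Ω => condMeasure ν W w p.1 * ν p.2) D
        = ∑ w ∈ Finset.univ.image W, prb πν {p | W1 p = w} * ent (condMeasure πν W1 w) D :=
          (Finset.sum_congr rfl hterm).symm
      _ = ∑ w ∈ Finset.univ.image W1, prb πν {p | W1 p = w} * ent (condMeasure πν W1 w) D :=
          hext
      _ = condEnt πν D W1 := hdec.symm
      _ ≤ ent πν D := hcond_le
  have hentD : ent (fun p : Ω × Ω => ν p.1 * ν p.2) (fun p => X p.1 - X p.2) =
      rdist ν ν X X + ent ν X := by
    unfold rdist
    ring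
  rw [hone, hcondX]
  rw [hentD] at hEsum
  linarith
end PerSlice
/-- Stability of controlled doubling under extra conditioning. -/
theorem cond_doubling_stable :
    ∃ C : ℝ, 0 < C ∧
      ∀ (Ω S T : Type) [Fintype Ω] (μ : Ω → ℝ), IsProb μ →
        ∀ (X : Ω → ℚ) (Z : Ω → S) (W : Ω → T) (M δ : ℝ), 0 < M → 0 ≤ δ →
          |condEnt μ X Z - M| ≤ δ * M →
          |condEnt μ X (fun ω => (W ω, Z ω)) - M| ≤ δ * M →
          condSelfDoubling μ X (fun ω => (W ω, Z ω)) ≤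
            2 * condSelfDoubling μ X Z + C * δ * M := by
  refine ⟨2, by norm_num, ?_⟩
  intro Ω S T _ μ hμ X Z W M δ hM hδ hZbound hWZbound
  classical
  set Y : Ω → T × S := fun ω => (W ω, Z ω) with hY
  -- the joint probability decomposes through the slices
  have hPwz : ∀ w z, prb μ {ω | (W ω, Z ω) = (w, z)} =
      prb μ {ω' | Z ω' = z} * prb (condMeasure μ Z z) {ω | W ω = w} := by
    intro w z
    have hcongr : prb μ {ω | (W ω, Z ω) = (w, z)} =
        prb μ ({ω | W ω = w} ∩ {ω' | Z ω' = z}) :=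
      prb_congr μ (fun ω => by simp [Prod.ext_iff, Set.mem_setOf_eq])
    rw [hcongr, prb_cond μ Z z {ω | W ω = w}]
    rcases eq_or_ne (prb μ {ω' | Z ω' = z}) 0 with hz | hz
    · rw [hz, zero_mul]
      have hle : prb μ ({ω | W ω = w} ∩ {ω' | Z ω' = z}) ≤ prb μ {ω' | Z ω' = z} :=
        prb_mono hμ.1 (fun ω h => h.2)
      have hge := prb_nonneg hμ.1 ({ω | W ω = w} ∩ {ω' | Z ω' = z})
      linarith
    · field_simp
  -- rewrite the doubly-conditioned self-doubling as an iterated sum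
  have hα : condSelfDoubling μ X Y =
      ∑ z ∈ Finset.univ.image Z, prb μ {ω | Z ω = z} *
        (∑ w ∈ Finset.univ.image W, prb (condMeasure μ Z z) {ω | W ω = w} *
          rdist (condMeasure (condMeasure μ Z z) W w) (condMeasure (condMeasure μ Z z) W w) X X) := by
    unfold condSelfDoubling
    have hext := sum_superset_prb μ Y
      (s := (Finset.univ.image W) ×ˢ (Finset.univ.image Z))
      (by
        intro y hy
        simp only [Finset.mem_image] at hy
        obtain ⟨ω, _, hω⟩ := hy
        rw [← hω]
        exact Finset.mem_product.mpr ⟨Finset.mem_image_of_mem W (Finset.mem_univ ω),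
          Finset.mem_image_of_mem Z (Finset.mem_univ ω)⟩)
      (fun y => rdist (condMeasure μ Y y) (condMeasure μ Y y) X X)
    rw [← hext, Finset.sum_product]
    rw [Finset.sum_comm]
    apply Finset.sum_congr rfl
    intro z _
    rw [Finset.mul_sum]
    apply Finset.sum_congr rfl
    intro w _
    have h1 : prb μ {ω | Y ω = (w, z)} =
        prb μ {ω' | Z ω' = z} * prb (condMeasure μ Z z) {ω | W ω = w} := hPwz w z
    have h2 : condMeasure μ Y (w, z) = condMeasure (condMeasure μ Z z) W w :=
      condMeasure_pair hμ.1 W Z w z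
    rw [h1, h2]
    ring
  -- apply the per-slice estimate
  have hslice : ∀ z ∈ Finset.univ.image Z,
      prb μ {ω | Z ω = z} *
        (∑ w ∈ Finset.univ.image W, prb (condMeasure μ Z z) {ω | W ω = w} *
          rdist (condMeasure (condMeasure μ Z z) W w) (condMeasure (condMeasure μ Z z) W w) X X) ≤
      prb μ {ω | Z ω = z} *
        (2 * rdist (condMeasure μ Z z) (condMeasure μ Z z) X X +
          (ent (condMeasure μ Z z) X - condEnt (condMeasure μ Z z) X W)) := by
    intro z _
    rcases eq_or_ne (prb μ {ω | Z ω = z}) 0 with hz | hz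
    · rw [hz, zero_mul, zero_mul]
    · exact mul_le_mul_of_nonneg_left (per_slice (condMeasure_isProb hμ Z z hz) X W)
        (prb_nonneg hμ.1 _)
  -- split the resulting sum
  have hsplit : ∑ z ∈ Finset.univ.image Z, prb μ {ω | Z ω = z} *
        (2 * rdist (condMeasure μ Z z) (condMeasure μ Z z) X X +
          (ent (condMeasure μ Z z) X - condEnt (condMeasure μ Z z) X W)) =
      2 * condSelfDoubling μ X Z +
        ((∑ z ∈ Finset.univ.image Z, prb μ {ω | Z ω = z} * ent (condMeasure μ Z z) X) -
         (∑ z ∈ Finset.univ.image Z, prb μ {ω | Z ω = z} * condEnt (condMeasure μ Z z) X W)) := by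
    unfold condSelfDoubling
    rw [Finset.mul_sum, ← Finset.sum_sub_distrib, ← Finset.sum_add_distrib]
    apply Finset.sum_congr rfl
    intro z _
    ring
  -- identify the entropy sums
  have hβ : ∑ z ∈ Finset.univ.image Z, prb μ {ω | Z ω = z} * ent (condMeasure μ Z z) X =
      condEnt μ X Z := (condEnt_decomp hμ.1 X Z).symm
  have hγ : ∑ z ∈ Finset.univ.image Z, prb μ {ω | Z ω = z} * condEnt (condMeasure μ Z z) X W =
      condEnt μ X Y := by
    have c1 := condEnt_decomp hμ.1 (fun ω => (X ω, W ω)) Z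
    have c2 := condEnt_decomp hμ.1 W Z
    have hsplit2 : ∑ z ∈ Finset.univ.image Z, prb μ {ω | Z ω = z} *
          condEnt (condMeasure μ Z z) X W =
        (∑ z ∈ Finset.univ.image Z, prb μ {ω | Z ω = z} *
            ent (condMeasure μ Z z) (fun ω => (X ω, W ω))) -
        (∑ z ∈ Finset.univ.image Z, prb μ {ω | Z ω = z} * ent (condMeasure μ Z z) W) := by
      rw [← Finset.sum_sub_distrib]
      apply Finset.sum_congr rfl
      intro z _
      unfold condEnt
      ring
    rw [hsplit2, ← c1, ← c2]
    have hassoc : ent μ (fun ω => ((X ω, W ω), Z ω)) = ent μ (fun ω => (X ω, (W ω, Z ω))) := by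
      have h := ent_comp_eq hμ.1 (fun ω => ((X ω, W ω), Z ω))
        (fun u : (ℚ × T) × S => (u.1.1, (u.1.2, u.2)))
        (fun v : ℚ × (T × S) => ((v.1, v.2.1), v.2.2)) (fun ω => rfl)
      have hfun : (fun ω => (fun u : (ℚ × T) × S => (u.1.1, (u.1.2, u.2)))
          ((fun ω => ((X ω, W ω), Z ω)) ω)) = (fun ω => (X ω, (W ω, Z ω))) := rfl
      rw [hfun] at h
      exact h.symm
    unfold condEnt
    rw [hassoc]
    ring
  -- put everything together
  have hchain : condSelfDoubling μ X Y ≤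
      2 * condSelfDoubling μ X Z + (condEnt μ X Z - condEnt μ X Y) := by
    rw [hα]
    refine le_trans (Finset.sum_le_sum hslice) ?_
    rw [hsplit, hβ, hγ]
  have habs : condEnt μ X Z - condEnt μ X Y ≤ 2 * δ * M := by
    rw [abs_le] at hZbound hWZbound
    have h1 := hZbound.2
    have h2 := hWZbound.1
    linarith
  calc condSelfDoubling μ X Y ≤
      2 * condSelfDoubling μ X Z + (condEnt μ X Z - condEnt μ X Y) := hchain
    _ ≤ 2 * condSelfDoubling μ X Z + 2 * δ * M := by linarith
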